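/- Consider the PID-controlled second-order system on ℝⁿ: trajectories x, ξ, u_I : ℝ → ℝⁿ satisfying x'(t) = ξ(t), ξ'(t) = b·ξ(t) + u(t) + u_B(x(t)) with u(t) = −k_P ∇φ(x(t)) − k_D ξ(t) + k_I u_I(t), and u_I'(t) = −k_P ∇φ(x(t)) − k_D ξ(t), where b, k_P, k_D, k_I, β are reals with k_P > 0, φ : ℝⁿ → ℝ is continuously differentiable, and u_B : ℝⁿ → ℝⁿ is continuously differentiable with derivative (Jacobian) Du_B. Define V(t) = φ(x(t)) + (1/(2k_P))‖ξ(t)‖² + (β/2)‖k_I(u_I(t) − ξ(t)) + u_B(x(t))‖². Then along any such trajectory, writing z(t) = k_I(u_I(t) − ξ(t)) + u_B(x(t)), the derivative of V satisfies V'(t) = −β k_I ‖z(t)‖² − ((k_D − k_I − b)/k_P) ‖ξ(t)‖² + ⟨z(t), [ (1/k_P − (b + k_I) β k_I)·I + β·Du_B(x(t)) ] ξ(t)⟩. -/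

import Mathlib

open scoped RealInnerProductSpace

/-- Lyapunov derivative computation for the PID-controlled
second-order system on ℝⁿ with state-dependent input bias. -/
theorem pid_lyapunov_derivative
    (n : ℕ) (b kP kD kI β : ℝ) (hkP : 0 < kP)
    (φ : EuclideanSpace ℝ (Fin n) → ℝ) (hφ : ContDiff ℝ 1 φ)
    (uB : EuclideanSpace ℝ (Fin n) → EuclideanSpace ℝ (Fin n)) (huB : ContDiff ℝ 1 uB)
    (x ξ uI : ℝ → EuclideanSpace ℝ (Fin n))
    (u : ℝ → EuclideanSpace ℝ (Fin n))
    (hu : ∀ t, u t = -(kP • gradient φ (x t)) - kD • ξ t + kI • uI t)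
    (hx : ∀ t, HasDerivAt x (ξ t) t)
    (hξ : ∀ t, HasDerivAt ξ (b • ξ t + u t + uB (x t)) t)
    (huI : ∀ t, HasDerivAt uI (-(kP • gradient φ (x t)) - kD • ξ t) t)
    (V : ℝ → ℝ)
    (hV : ∀ t, V t = φ (x t) + (1 / (2 * kP)) * ‖ξ t‖ ^ 2
        + (β / 2) * ‖kI • (uI t - ξ t) + uB (x t)‖ ^ 2)
    (z : ℝ → EuclideanSpace ℝ (Fin n))
    (hz : ∀ t, z t = kI • (uI t - ξ t) + uB (x t)) :
    ∀ t, HasDerivAt V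
      (-(β * kI) * ‖z t‖ ^ 2 - ((kD - kI - b) / kP) * ‖ξ t‖ ^ 2
        + ⟪z t, (1 / kP - (b + kI) * β * kI) • ξ t + β • fderiv ℝ uB (x t) (ξ t)⟫) t := by
  intro t
  set g := gradient φ (x t) with hg
  set D := fderiv ℝ uB (x t) (ξ t) with hD
  -- derivative of φ ∘ x
  have hφx : HasDerivAt (fun s => φ (x s)) (⟪g, ξ t⟫) t := by
    have h1 : HasDerivAt (fun s => φ (x s)) (fderiv ℝ φ (x t) (ξ t)) t :=
      ((hφ.differentiable one_ne_zero).differentiableAt.hasFDerivAt).comp_hasDerivAt t (hx t)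
    have h2 : ⟪g, ξ t⟫ = fderiv ℝ φ (x t) (ξ t) := by
      rw [hg, gradient]
      exact InnerProductSpace.toDual_symm_apply
    rw [h2]; exact h1
  -- rewrite ξ'
  have hξ'eq : b • ξ t + u t + uB (x t)
      = (b - kD + kI) • ξ t - kP • g + z t := by
    rw [hu, hz]; module
  have hξ' : HasDerivAt ξ ((b - kD + kI) • ξ t - kP • g + z t) t := hξ'eq ▸ hξ t
  -- derivative of z function
  have hz'eq : kI • ((-(kP • g) - kD • ξ t) - (b • ξ t + u t + uB (x t))) + D
      = (-kI) • z t + (-(kI * (b + kI))) • ξ t + D := by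
    rw [hu, hz]; module
  have hzd : HasDerivAt (fun s => kI • (uI s - ξ s) + uB (x s))
      ((-kI) • z t + (-(kI * (b + kI))) • ξ t + D) t := by
    rw [← hz'eq]
    exact (((huI t).sub (hξ t)).const_smul kI).add
      (((huB.differentiable one_ne_zero).differentiableAt.hasFDerivAt).comp_hasDerivAt t (hx t))
  -- derivative of inner products
  have hξsq : HasDerivAt (fun s => ⟪ξ s, ξ s⟫)
      (⟪ξ t, (b - kD + kI) • ξ t - kP • g + z t⟫
        + ⟪(b - kD + kI) • ξ t - kP • g + z t, ξ t⟫) t :=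
    hξ'.inner ℝ hξ'
  have hzsq : HasDerivAt (fun s => ⟪(kI • (uI s - ξ s) + uB (x s) : EuclideanSpace ℝ (Fin n)),
        kI • (uI s - ξ s) + uB (x s)⟫)
      (⟪z t, (-kI) • z t + (-(kI * (b + kI))) • ξ t + D⟫
        + ⟪(-kI) • z t + (-(kI * (b + kI))) • ξ t + D, z t⟫) t := by
    have := hzd.inner ℝ hzd
    rwa [← hz t] at this
  -- assemble V
  have hVfun : V = fun s => φ (x s) + (1 / (2 * kP)) * ⟪ξ s, ξ s⟫
      + (β / 2) * ⟪(kI • (uI s - ξ s) + uB (x s) : EuclideanSpace ℝ (Fin n)),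
          kI • (uI s - ξ s) + uB (x s)⟫ := by
    funext s
    rw [hV s, real_inner_self_eq_norm_sq, real_inner_self_eq_norm_sq]
  have htot := (hφx.add (hξsq.const_mul (1 / (2 * kP)))).add (hzsq.const_mul (β / 2))
  simp only [Pi.add_def] at htot
  rw [← hVfun] at htot
  refine htot.congr_deriv ?_
  simp only [inner_add_left, inner_add_right, inner_sub_left, inner_sub_right,
    real_inner_smul_left, real_inner_smul_right, real_inner_self_eq_norm_sq]
  rw [real_inner_comm (ξ t) (z t), real_inner_comm (ξ t) g, real_inner_comm D (z t)]
  field_simp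
  ring
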